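/- arXiv:2401.07455 — 3 statements merged into one kernel-verified Lean document; each statement's English description precedes it below -/
import Mathlib

section
/- In the equilibrium profile s^e: the departure times are strictly increasing (s^e_1 < s^e_2 < … < s^e_P), the destination arrival times satisfy d_k = t⁻ + (k−1)·m/μ for every k ∈ {1,…,P} (in particular d_1 = s^e_1 = t⁻ and d_P = t⁺), and every user's trip cost equals ρ, i.e. C_k = ρ for all k ∈ {1,…,P}. -/
/-- Schedule delay cost function `V(d) = β·max(−d,0) + γ·max(d,0)`. -/
noncomputable def sdc (β γ d : ℝ) : ℝ := β * max (-d) 0 + γ * max d 0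

/-- Destination arrival times: `d 0 = s 0`, `d (k+1) = max (d k + m/μ) (s (k+1))`. -/
noncomputable def arr (m μ : ℝ) (s : ℕ → ℝ) : ℕ → ℝ
  | 0 => s 0
  | k + 1 => max (arr m μ s k + m / μ) (s (k + 1))

/-- Trip cost of the `k`-th departing user. -/
noncomputable def cost (β γ m μ : ℝ) (s : ℕ → ℝ) (k : ℕ) : ℝ :=
  (arr m μ s k - s k) + sdc β γ (arr m μ s k)

/-- A time profile: strictly increasing departure times (0-indexed, users `0,…,P-1`). -/
def IsProfile (P : ℕ) (s : ℕ → ℝ) : Prop := ∀ i, i + 1 < P → s i < s (i + 1)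

/-- Equilibrium departure time of the first user. -/
noncomputable def tminus (P : ℕ) (m μ β γ : ℝ) : ℝ :=
  -(m * ((P : ℝ) - 1) / μ) * (γ / (β + γ))

/-- Equilibrium departure time of the last user. -/
noncomputable def tplus (P : ℕ) (m μ β γ : ℝ) : ℝ :=
  tminus P m μ β γ + m * ((P : ℝ) - 1) / μ

/-- Equilibrium trip cost. -/
noncomputable def rho (P : ℕ) (m μ β γ : ℝ) : ℝ :=
  (m * ((P : ℝ) - 1) / μ) * (β * γ / (β + γ))

/-- The equilibrium profile `s^e` (0-indexed: index `k` is the `(k+1)`-st departing user). -/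
noncomputable def se (P : ℕ) (m μ β γ : ℝ) (k : ℕ) : ℝ :=
  if (k : ℤ) ≤ ⌊γ * ((P : ℝ) - 1) / (β + γ)⌋ then
    tminus P m μ β γ + (m * (1 - β) / μ) * (k : ℝ)
  else
    tminus P m μ β γ + (m * (1 + γ) / μ) * (k : ℝ) - m * γ * ((P : ℝ) - 1) / μ

theorem equilibrium_profile_properties (P : ℕ) (hP : 2 ≤ P) (m μ β γ : ℝ)
    (hm : 0 < m) (hm1 : m ≤ 1) (hμ : 0 < μ)
    (hβ : 0 < β) (hβ1 : β < 1) (hγ : 0 < γ) :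
    (∀ i, i + 1 < P → se P m μ β γ i < se P m μ β γ (i + 1)) ∧
    (∀ k, k < P →
      arr m μ (se P m μ β γ) k = tminus P m μ β γ + (k : ℝ) * (m / μ)) ∧
    arr m μ (se P m μ β γ) 0 = se P m μ β γ 0 ∧
    se P m μ β γ 0 = tminus P m μ β γ ∧
    arr m μ (se P m μ β γ) (P - 1) = tplus P m μ β γ ∧
    (∀ k, k < P → cost β γ m μ (se P m μ β γ) k = rho P m μ β γ) := by
  have hβγ : 0 < β + γ := by linarith
  have hT : 0 < m / μ := div_pos hm hμ
  have hP1 : (1:ℝ) ≤ (P : ℝ) - 1 := by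
    have h2 : (2:ℝ) ≤ (P:ℝ) := by exact_mod_cast hP
    linarith
  have hx0 : (0:ℝ) ≤ γ * ((P : ℝ) - 1) / (β + γ) := by positivity
  have htm : tminus P m μ β γ = -((m / μ) * (γ * ((P : ℝ) - 1) / (β + γ))) := by
    unfold tminus; ring
  have hse : ∀ k : ℕ, se P m μ β γ k =
      if (k : ℝ) ≤ γ * ((P : ℝ) - 1) / (β + γ) then
        tminus P m μ β γ + (m * (1 - β) / μ) * (k : ℝ)
      else tminus P m μ β γ + (m * (1 + γ) / μ) * (k : ℝ) - m * γ * ((P : ℝ) - 1) / μ := by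
    intro k
    simp only [se, Int.le_floor, Int.cast_natCast]
  have harr : ∀ k, k < P →
      arr m μ (se P m μ β γ) k = tminus P m μ β γ + (k : ℝ) * (m / μ) := by
    intro k
    induction k with
    | zero =>
      intro _
      have h0 : (((0:ℕ)) : ℝ) ≤ γ * ((P : ℝ) - 1) / (β + γ) := by simpa using hx0
      show se P m μ β γ 0 = _
      rw [hse 0, if_pos h0]
      push_cast; ring
    | succ n ih =>
      intro hn
      have hnP : n < P := by omega
      have hn2 : n + 2 ≤ P := hn
      have hnr : (n:ℝ) + 2 ≤ (P:ℝ) := by exact_mod_cast hn2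
      rw [arr, ih hnP, hse (n+1)]
      push_cast
      by_cases hc : ((n:ℝ) + 1) ≤ γ * ((P : ℝ) - 1) / (β + γ)
      · rw [if_pos hc, max_eq_left]
        · ring
        · have e : (tminus P m μ β γ + (n:ℝ) * (m/μ) + m/μ)
              - (tminus P m μ β γ + (m * (1 - β) / μ) * ((n:ℝ) + 1))
              = (m * β / μ) * ((n:ℝ) + 1) := by ring
          have h : 0 ≤ (m * β / μ) * ((n:ℝ) + 1) := by positivity
          linarith
      · rw [if_neg hc, max_eq_left]
        · ring
        · have e : (tminus P m μ β γ + (n:ℝ) * (m/μ) + m/μ)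
              - (tminus P m μ β γ + (m * (1 + γ) / μ) * ((n:ℝ) + 1) - m * γ * ((P:ℝ) - 1) / μ)
              = (m * γ / μ) * (((P:ℝ) - 1) - ((n:ℝ) + 1)) := by ring
          have h : 0 ≤ (m * γ / μ) * (((P:ℝ) - 1) - ((n:ℝ) + 1)) :=
            mul_nonneg (by positivity) (by linarith)
          linarith
  refine ⟨?_, harr, ?_, ?_, ?_, ?_⟩
  · intro i hi
    rw [hse i, hse (i+1)]
    push_cast
    by_cases h1 : (i:ℝ) ≤ γ * ((P : ℝ) - 1) / (β + γ)
    · by_cases h2 : (i:ℝ) + 1 ≤ γ * ((P : ℝ) - 1) / (β + γ)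
      · rw [if_pos h1, if_pos h2]
        have e : (tminus P m μ β γ + (m * (1 - β) / μ) * ((i:ℝ) + 1))
            - (tminus P m μ β γ + (m * (1 - β) / μ) * (i:ℝ)) = m * (1 - β) / μ := by ring
        have h : 0 < m * (1 - β) / μ := by
          apply div_pos (mul_pos hm (by linarith)) hμ
        linarith
      · rw [if_pos h1, if_neg h2]
        have hkey : γ * ((P:ℝ) - 1) < ((i:ℝ) + 1) * (β + γ) :=
          (div_lt_iff₀ hβγ).mp (not_le.mp h2)
        have hb : 0 < 1 + γ * ((i:ℝ) + 1) + β * (i:ℝ) - γ * ((P:ℝ) - 1) := by nlinarith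
        have e : (tminus P m μ β γ + (m * (1 + γ) / μ) * ((i:ℝ) + 1) - m * γ * ((P:ℝ) - 1) / μ)
            - (tminus P m μ β γ + (m * (1 - β) / μ) * (i:ℝ))
            = (m / μ) * (1 + γ * ((i:ℝ) + 1) + β * (i:ℝ) - γ * ((P:ℝ) - 1)) := by ring
        have h := mul_pos hT hb
        linarith
    · by_cases h2 : (i:ℝ) + 1 ≤ γ * ((P : ℝ) - 1) / (β + γ)
      · exact absurd (le_trans (by linarith) h2) h1
      · rw [if_neg h1, if_neg h2]
        have e : (tminus P m μ β γ + (m * (1 + γ) / μ) * ((i:ℝ) + 1) - m * γ * ((P:ℝ) - 1) / μ)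
            - (tminus P m μ β γ + (m * (1 + γ) / μ) * (i:ℝ) - m * γ * ((P:ℝ) - 1) / μ)
            = m * (1 + γ) / μ := by ring
        have h : 0 < m * (1 + γ) / μ := div_pos (mul_pos hm (by linarith)) hμ
        linarith
  · rfl
  · rw [hse 0, if_pos (by simpa using hx0)]
    push_cast; ring
  · have h1 : P - 1 < P := by omega
    rw [harr (P-1) h1]
    have hc : ((P-1:ℕ):ℝ) = (P:ℝ) - 1 := by
      push_cast [Nat.cast_sub (by omega : 1 ≤ P)]
      ring
    rw [hc]
    unfold tplus
    ring
  · intro k hk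
    rw [cost, harr k hk, hse k]
    by_cases hc : (k:ℝ) ≤ γ * ((P : ℝ) - 1) / (β + γ)
    · rw [if_pos hc]
      have hd0 : tminus P m μ β γ + (k:ℝ) * (m/μ) ≤ 0 := by
        have h : 0 ≤ (m/μ) * (γ * ((P:ℝ) - 1) / (β + γ) - (k:ℝ)) :=
          mul_nonneg hT.le (by linarith)
        have e : -(tminus P m μ β γ + (k:ℝ) * (m/μ))
            = (m/μ) * (γ * ((P:ℝ) - 1) / (β + γ) - (k:ℝ)) := by rw [htm]; ring
        linarith
      rw [sdc, max_eq_left (neg_nonneg.mpr hd0), max_eq_right hd0]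
      unfold tminus rho
      field_simp
      ring
    · rw [if_neg hc]
      have hd0 : 0 ≤ tminus P m μ β γ + (k:ℝ) * (m/μ) := by
        have h : 0 ≤ (m/μ) * ((k:ℝ) - γ * ((P:ℝ) - 1) / (β + γ)) :=
          mul_nonneg hT.le (by linarith [not_le.mp hc])
        have e : tminus P m μ β γ + (k:ℝ) * (m/μ)
            = (m/μ) * ((k:ℝ) - γ * ((P:ℝ) - 1) / (β + γ)) := by rw [htm]; ring
        linarith
      rw [sdc, max_eq_right (neg_nonpos.mpr hd0), max_eq_left hd0]
      unfold tminus rho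
      field_simp
      ring
end

section
/- For every index j ∈ {1,…,P} and every real s′ with s′ ≠ s^e_k for all k ≠ j, the deviator's trip cost C′ in the deviated profile satisfies ρ ≤ C′ + m(1+γ)/μ. Consequently, the equilibrium profile s^e is an ε-Nash equilibrium of the departure time choice game for every ε ≥ m(1+γ)/μ: no user can lower their trip cost (which equals ρ at s^e) by more than m(1+γ)/μ by unilaterally changing their departure time. -/
section aux
variable {P : ℕ} {m μ β γ : ℝ}

lemma sdc_ge_neg (hβ : 0 < β) (hγ : 0 < γ) (a : ℝ) : β * (-a) ≤ sdc β γ a := by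
  unfold sdc
  have h1 : β * (-a) ≤ β * max (-a) 0 ∨ True := Or.inr trivial
  nlinarith [le_max_left (-a) 0, le_max_right a 0,
    mul_nonneg hγ.le (le_max_right a 0), mul_le_mul_of_nonneg_left (le_max_left (-a) 0) hβ.le]

lemma sdc_ge_pos (hβ : 0 < β) (hγ : 0 < γ) (a : ℝ) : γ * a ≤ sdc β γ a := by
  unfold sdc
  nlinarith [le_max_left a 0, le_max_right a 0, le_max_right (-a) 0,
    mul_le_mul_of_nonneg_left (le_max_left a 0) hγ.le,
    mul_nonneg hβ.le (le_max_right (-a) 0)]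

lemma sdc_lipschitz (hβ : 0 < β) (hγ : 0 < γ) {a b : ℝ} (hab : a ≤ b) :
    sdc β γ a - β * (b - a) ≤ sdc β γ b := by
  unfold sdc
  rcases le_total a 0 with h | h <;> rcases le_total b 0 with h2 | h2
  · rw [max_eq_left (by linarith : (0:ℝ) ≤ -a), max_eq_right h,
      max_eq_left (by linarith : (0:ℝ) ≤ -b), max_eq_right h2]
    nlinarith
  · rw [max_eq_left (by linarith : (0:ℝ) ≤ -a), max_eq_right h,
      max_eq_right (by linarith : -b ≤ 0), max_eq_left h2]
    nlinarith
  · have ha : a = 0 := le_antisymm (le_trans hab h2) h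
    have hb : b = 0 := le_antisymm h2 (ha ▸ hab)
    subst ha hb; simp
  · rw [max_eq_right (by linarith : -a ≤ 0), max_eq_left h,
      max_eq_right (by linarith : -b ≤ 0), max_eq_left h2]
    nlinarith
end aux

section aux2
variable {P : ℕ} {m μ β γ : ℝ}

lemma se_gap (hP : 2 ≤ P) (hm : 0 < m) (hμ : 0 < μ) (hβ : 0 < β) (hβ1 : β < 1)
    (hγ : 0 < γ) (k : ℕ) :
    m * (1 - β) / μ ≤ se P m μ β γ (k + 1) - se P m μ β γ k ∧
      se P m μ β γ (k + 1) - se P m μ β γ k ≤ m * (1 + γ) / μ := by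
  have hbg : (0:ℝ) < β + γ := by linarith
  set K := ⌊γ * ((P : ℝ) - 1) / (β + γ)⌋ with hKdef
  have hx1 : (K : ℝ) ≤ γ * ((P : ℝ) - 1) / (β + γ) := Int.floor_le _
  have hx2 : γ * ((P : ℝ) - 1) / (β + γ) - 1 < (K : ℝ) := Int.sub_one_lt_floor _
  have hdiv : ∀ x y : ℝ, x ≤ y → m * x / μ ≤ m * y / μ := by
    intro x y hxy; gcongr
  by_cases h1 : ((k:ℤ) + 1 ≤ K)
  · have h0 : ((k:ℤ)) ≤ K := by omega
    have heq : se P m μ β γ (k + 1) - se P m μ β γ k = m * (1 - β) / μ := by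
      unfold se
      rw [← hKdef, if_pos h0, if_pos (by exact_mod_cast h1)]
      push_cast; ring
    rw [heq]
    exact ⟨le_refl _, by apply hdiv; linarith⟩
  · by_cases h0 : ((k:ℤ)) ≤ K
    · have hk : ((k:ℤ)) = K := by omega
      have hk1 : (k : ℝ) ≤ γ * ((P : ℝ) - 1) / (β + γ) := by
        rw [← hk] at hx1; exact_mod_cast hx1
      have hk2 : γ * ((P : ℝ) - 1) / (β + γ) < (k : ℝ) + 1 := by
        rw [← hk] at hx2; push_cast at hx2; linarith
      have hk1' : (k : ℝ) * (β + γ) ≤ γ * ((P : ℝ) - 1) := (le_div_iff₀ hbg).mp hk1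
      have hk2' : γ * ((P : ℝ) - 1) < ((k : ℝ) + 1) * (β + γ) := (div_lt_iff₀ hbg).mp hk2
      have heq : se P m μ β γ (k + 1) - se P m μ β γ k
          = m * ((β + γ) * (k : ℝ) + 1 + γ - γ * ((P : ℝ) - 1)) / μ := by
        unfold se
        rw [← hKdef, if_pos h0, if_neg (by exact_mod_cast h1)]
        unfold tminus; push_cast; ring
      rw [heq]
      exact ⟨by apply hdiv; nlinarith, by apply hdiv; nlinarith⟩
    · have heq : se P m μ β γ (k + 1) - se P m μ β γ k = m * (1 + γ) / μ := by
        unfold se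
        rw [← hKdef, if_neg h0, if_neg (by exact_mod_cast h1)]
        push_cast; ring
      rw [heq]
      exact ⟨by apply hdiv; linarith, le_refl _⟩

lemma se_strictMono (hP : 2 ≤ P) (hm : 0 < m) (hμ : 0 < μ) (hβ : 0 < β) (hβ1 : β < 1)
    (hγ : 0 < γ) : StrictMono (se P m μ β γ) := by
  apply strictMono_nat_of_lt_succ
  intro k
  have h := (se_gap hP hm hμ hβ hβ1 hγ k).1
  have : (0:ℝ) < m * (1 - β) / μ := div_pos (by nlinarith) hμ
  linarith

lemma se_zero (hP : 2 ≤ P) (hβ : 0 < β) (hγ : 0 < γ) :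
    se P m μ β γ 0 = tminus P m μ β γ := by
  have hbg : (0:ℝ) < β + γ := by linarith
  have hP1 : (1:ℝ) ≤ (P:ℝ) - 1 := by
    have : (2:ℝ) ≤ (P:ℝ) := by exact_mod_cast hP
    linarith
  have h0 : (0:ℤ) ≤ ⌊γ * ((P : ℝ) - 1) / (β + γ)⌋ := by
    apply Int.floor_nonneg.mpr; apply div_nonneg (by nlinarith) hbg.le
  unfold se
  rw [if_pos (by exact_mod_cast h0)]
  simp

lemma se_last (hP : 2 ≤ P) (hm : 0 < m) (hμ : 0 < μ) (hβ : 0 < β) (hγ : 0 < γ) :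
    se P m μ β γ (P - 1) = tplus P m μ β γ := by
  have hbg : (0:ℝ) < β + γ := by linarith
  have hP1 : (1:ℝ) ≤ (P:ℝ) - 1 := by
    have : (2:ℝ) ≤ (P:ℝ) := by exact_mod_cast hP
    linarith
  have hlt : γ * ((P : ℝ) - 1) / (β + γ) < ((P:ℝ) - 1) := by
    rw [div_lt_iff₀ hbg]; nlinarith
  have hfl : ⌊γ * ((P : ℝ) - 1) / (β + γ)⌋ < (P : ℤ) - 1 := by
    have := Int.floor_le (γ * ((P : ℝ) - 1) / (β + γ))
    have h2 : (⌊γ * ((P : ℝ) - 1) / (β + γ)⌋ : ℝ) < (P:ℝ) - 1 := lt_of_le_of_lt this hlt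
    exact_mod_cast h2
  have hcast : ((P - 1 : ℕ) : ℤ) = (P:ℤ) - 1 := by omega
  have hcastR : ((P - 1 : ℕ) : ℝ) = (P:ℝ) - 1 := by push_cast [Nat.cast_sub (by omega : 1 ≤ P)]; ring
  unfold se
  rw [hcast, if_neg (by omega), hcastR]
  unfold tplus tminus; field_simp; ring

end aux2

section aux3
variable {P : ℕ} {m μ β γ : ℝ}

lemma arr_ge_self (m μ : ℝ) (s : ℕ → ℝ) (k : ℕ) : s k ≤ arr m μ s k := by
  cases k with
  | zero => exact le_refl _
  | succ n => exact le_max_right _ _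

lemma arr_ge_start (m μ : ℝ) (s : ℕ → ℝ) (k : ℕ) :
    s 0 + k * (m / μ) ≤ arr m μ s k := by
  induction k with
  | zero => simp [arr]
  | succ n ih =>
    have h1 : arr m μ s n + m / μ ≤ arr m μ s (n + 1) := le_max_left _ _
    push_cast
    nlinarith

lemma arr_se (hP : 2 ≤ P) (hm : 0 < m) (hμ : 0 < μ) (hβ : 0 < β) (hβ1 : β < 1)
    (hγ : 0 < γ) : ∀ k, k < P →
    arr m μ (se P m μ β γ) k = tminus P m μ β γ + m / μ * k := by
  have hbg : (0:ℝ) < β + γ := by linarith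
  intro k
  induction k with
  | zero => intro _; simp [arr, se_zero hP hβ hγ]
  | succ n ih =>
    intro hn
    have hrec : arr m μ (se P m μ β γ) (n+1)
        = max (arr m μ (se P m μ β γ) n + m / μ) (se P m μ β γ (n + 1)) := rfl
    rw [hrec, ih (by omega)]
    have hub : se P m μ β γ (n + 1) ≤ tminus P m μ β γ + m / μ * (n : ℝ) + m / μ := by
      have hP1 : ((n:ℝ) + 1) ≤ (P:ℝ) - 1 := by
        have : (n + 2 : ℕ) ≤ P := by omega
        have := (Nat.cast_le (α := ℝ)).mpr this
        push_cast at this; linarith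
      unfold se
      by_cases h : ((n:ℤ) + 1 ≤ ⌊γ * ((P : ℝ) - 1) / (β + γ)⌋)
      · rw [if_pos (by exact_mod_cast h)]
        push_cast
        have h1 : m * (1 - β) / μ ≤ m / μ := by
          rw [div_le_div_iff₀ hμ hμ]; nlinarith [mul_pos (mul_pos hm hμ) hβ]
        nlinarith [div_pos hm hμ]
      · rw [if_neg (by exact_mod_cast h)]
        push_cast
        have h2 : m * (1 + γ) / μ * ((n:ℝ) + 1) - m * γ * ((P:ℝ) - 1) / μ
            ≤ m / μ * ((n:ℝ) + 1) := by
          rw [div_mul_eq_mul_div, div_sub_div_same, div_mul_eq_mul_div, div_le_div_iff₀ hμ hμ]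
          nlinarith [mul_pos (mul_pos hm hμ) hγ]
        linarith
    rw [max_eq_left (by linarith)]
    push_cast; ring

end aux3

section aux4
variable {P : ℕ} {m μ β γ : ℝ}

lemma cost_se (hP : 2 ≤ P) (hm : 0 < m) (hμ : 0 < μ) (hβ : 0 < β) (hβ1 : β < 1)
    (hγ : 0 < γ) {k : ℕ} (hk : k < P) :
    cost β γ m μ (se P m μ β γ) k = rho P m μ β γ := by
  have hbg : (0:ℝ) < β + γ := by linarith
  have harr := arr_se hP hm hμ hβ hβ1 hγ k hk
  have hP1 : (k:ℝ) ≤ (P:ℝ) - 1 := by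
    have : (k + 1 : ℕ) ≤ P := by omega
    have := (Nat.cast_le (α := ℝ)).mpr this
    push_cast at this; linarith
  unfold cost sdc
  rw [harr]
  unfold se tminus rho
  by_cases h : ((k:ℤ) ≤ ⌊γ * ((P : ℝ) - 1) / (β + γ)⌋)
  · rw [if_pos h]
    have hk1 : (k : ℝ) ≤ γ * ((P : ℝ) - 1) / (β + γ) := by
      have : ((k:ℤ) : ℝ) ≤ (⌊γ * ((P : ℝ) - 1) / (β + γ)⌋ : ℝ) := by exact_mod_cast h
      exact le_trans this (Int.floor_le _)
    have hk1' : (k : ℝ) * (β + γ) ≤ γ * ((P : ℝ) - 1) := (le_div_iff₀ hbg).mp hk1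
    have harrle : -(m * ((P : ℝ) - 1) / μ) * (γ / (β + γ)) + m / μ * (k:ℝ) ≤ 0 := by
      have h2 : (-(m * ((P : ℝ) - 1) / μ) * (γ / (β + γ)) + m / μ * (k:ℝ)) * (μ * (β + γ))
          = m * (k:ℝ) * (β + γ) - m * γ * ((P:ℝ) - 1) := by
        field_simp; ring
      nlinarith [mul_pos hμ hbg, mul_nonneg hm.le (sub_nonneg.2 hk1')]
    unfold tminus at harrle
    rw [max_eq_left (by linarith), max_eq_right harrle]
    field_simp
    ring
  · rw [if_neg h]
    have hk1 : γ * ((P : ℝ) - 1) / (β + γ) < (k : ℝ) := by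
      have h2 : (⌊γ * ((P : ℝ) - 1) / (β + γ)⌋ : ℤ) < k := by omega
      calc γ * ((P : ℝ) - 1) / (β + γ) < ⌊γ * ((P : ℝ) - 1) / (β + γ)⌋ + 1 :=
            Int.lt_floor_add_one _
        _ ≤ (k:ℝ) := by exact_mod_cast h2
    have hk1' : γ * ((P : ℝ) - 1) ≤ (k : ℝ) * (β + γ) := by
      rw [div_lt_iff₀ hbg] at hk1; linarith
    have harrge : 0 ≤ -(m * ((P : ℝ) - 1) / μ) * (γ / (β + γ)) + m / μ * (k:ℝ) := by
      have h2 : (-(m * ((P : ℝ) - 1) / μ) * (γ / (β + γ)) + m / μ * (k:ℝ)) * (μ * (β + γ))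
          = m * (k:ℝ) * (β + γ) - m * γ * ((P:ℝ) - 1) := by
        field_simp; ring
      nlinarith [mul_pos hμ hbg, mul_nonneg hm.le (sub_nonneg.2 hk1')]
    unfold tminus at harrge
    rw [max_eq_right (by linarith), max_eq_left harrge]
    field_simp
    ring

end aux4

section main
variable {P : ℕ} {m μ β γ : ℝ}

theorem epsilon_nash_equilibrium (P : ℕ) (hP : 2 ≤ P) (m μ β γ : ℝ)
    (hm : 0 < m) (hm1 : m ≤ 1) (hμ : 0 < μ)
    (hβ : 0 < β) (hβ1 : β < 1) (hγ : 0 < γ)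
    (j : ℕ) (hj : j < P) (s' : ℝ)
    (hs' : ∀ k, k < P → k ≠ j → s' ≠ se P m μ β γ k)
    (sd : ℕ → ℝ) (hsd : IsProfile P sd)
    (hmult : Multiset.map sd (Finset.range P).val =
      s' ::ₘ (Multiset.map (se P m μ β γ) (Finset.range P).val).erase (se P m μ β γ j))
    (o' : ℕ) (ho' : o' < P) (hso' : sd o' = s') :
    rho P m μ β γ ≤ cost β γ m μ sd o' + m * (1 + γ) / μ ∧
    ∀ ε : ℝ, m * (1 + γ) / μ ≤ ε →
      cost β γ m μ (se P m μ β γ) j ≤ cost β γ m μ sd o' + ε := by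
  have hbg : (0:ℝ) < β + γ := by linarith
  set e := se P m μ β γ with hedef
  have hemono : StrictMono e := se_strictMono hP hm hμ hβ hβ1 hγ
  have hslack : (0:ℝ) < m * (1 + γ) / μ := div_pos (by nlinarith) hμ
  have hPr : (1:ℝ) ≤ (P:ℝ) - 1 := by
    have : (2:ℝ) ≤ (P:ℝ) := by exact_mod_cast hP
    linarith
  -- basic facts about ρ and t⁻, t⁺
  have hrho1 : rho P m μ β γ = β * (-(tminus P m μ β γ)) := by
    unfold rho tminus; field_simp
  have hrho2 : rho P m μ β γ = γ * tplus P m μ β γ := by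
    unfold rho tplus tminus; field_simp; ring
  have htm0 : tminus P m μ β γ ≤ 0 := by
    unfold tminus
    have : 0 ≤ (m * ((P : ℝ) - 1) / μ) * (γ / (β + γ)) := by
      apply mul_nonneg (div_nonneg (by nlinarith) hμ.le) (div_nonneg hγ.le hbg.le)
    linarith
  -- deviator's cost is at least sdc s'
  have hCV : sdc β γ s' ≤ cost β γ m μ sd o' := by
    have h1 : s' ≤ arr m μ sd o' := hso' ▸ arr_ge_self m μ sd o'
    have h2 := sdc_lipschitz hβ hγ h1
    unfold cost; rw [hso']
    nlinarith
  -- main lower bound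
  have hmain : rho P m μ β γ ≤ cost β γ m μ sd o' + m * (1 + γ) / μ := by
    rcases le_or_gt s' (tminus P m μ β γ) with h1 | h1
    · -- early deviation
      have h2 : β * (-s') ≤ sdc β γ s' := sdc_ge_neg hβ hγ s'
      have h3 : β * (-(tminus P m μ β γ)) ≤ β * (-s') := by nlinarith
      linarith [hrho1 ▸ le_trans h3 (le_trans h2 hCV)]
    · rcases le_or_gt (tplus P m μ β γ) s' with h2 | h2
      · -- late deviation
        have h3 : γ * s' ≤ sdc β γ s' := sdc_ge_pos hβ hγ s'
        have h4 : γ * tplus P m μ β γ ≤ γ * s' := by nlinarith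
        linarith [hrho2 ▸ le_trans h4 (le_trans h3 hCV)]
      · -- middle deviation
        -- all departure times are ≥ t⁻
        have hall : ∀ i, i < P → tminus P m μ β γ ≤ sd i := by
          intro i hi
          have hmem : sd i ∈ Multiset.map sd (Finset.range P).val :=
            Multiset.mem_map.2 ⟨i, by simp [hi], rfl⟩
          rw [hmult] at hmem
          rcases Multiset.mem_cons.mp hmem with h | h
          · rw [h]; linarith
          · have := Multiset.mem_of_mem_erase h
            rcases Multiset.mem_map.mp this with ⟨k, _, hk2⟩
            rw [← hk2]
            calc tminus P m μ β γ = e 0 := (se_zero hP hβ hγ).symm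
              _ ≤ e k := hemono.monotone (Nat.zero_le k)
        -- arrival lower bound
        have harrlb : tminus P m μ β γ + m / μ * (o' : ℝ) ≤ arr m μ sd o' := by
          have h3 := arr_ge_start m μ sd o'
          have h4 := hall 0 (by omega)
          nlinarith
        -- counting: s' ≤ e o' + slack
        have hub : s' ≤ e o' + m * (1 + γ) / μ := by
          rcases Nat.lt_or_ge (o' + 1) P with hcase | hcase
          · -- count elements < s'
            have hmono' : ∀ a b, a < b → b < P → sd a < sd b := by
              intro a b hab hbP
              induction b with
              | zero => omega
              | succ n ih =>
                rcases Nat.lt_succ_iff_lt_or_eq.mp hab with h | h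
                · exact lt_trans (ih h (by omega)) (hsd n (by omega))
                · subst h; exact hsd a (by omega)
            have hcnt : Multiset.countP (fun x => x < s')
                (Multiset.map sd (Finset.range P).val) = o' := by
              rw [Multiset.countP_map]
              have : Multiset.filter (fun a => sd a < s') (Finset.range P).val
                  = (Finset.filter (fun a => sd a < s') (Finset.range P)).val := by
                rw [Finset.filter_val]
              rw [this]
              have hfeq : Finset.filter (fun a => sd a < s') (Finset.range P)
                  = Finset.range o' := by
                ext i
                simp only [Finset.mem_filter, Finset.mem_range]
                constructor
                · rintro ⟨hiP, hilt⟩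
                  by_contra hge
                  push_neg at hge
                  rcases Nat.lt_or_ge o' i with h | h
                  · have := hmono' o' i h hiP
                    rw [hso'] at this; linarith
                  · have : i = o' := by omega
                    rw [this, hso'] at hilt; linarith
                · intro hio
                  exact ⟨by omega, by rw [← hso']; exact hmono' i o' hio ho'⟩
              rw [hfeq]
              simp
            -- RHS count
            have hjm : e j ∈ Multiset.map e (Finset.range P).val :=
              Multiset.mem_map.2 ⟨j, by simp [hj], rfl⟩
            have hcnt2 : Multiset.countP (fun x => x < s')
                (Multiset.map sd (Finset.range P).val)
                + (if e j < s' then 1 else 0)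
                = Multiset.countP (fun x => x < s')
                  (Multiset.map e (Finset.range P).val) := by
              rw [hmult, Multiset.countP_cons, ← Multiset.cons_erase hjm,
                Multiset.countP_cons]
              simp [Multiset.cons_erase hjm]
            by_contra hgt
            push_neg at hgt
            have hgap := (se_gap hP hm hμ hβ hβ1 hγ o').2
            have he1 : e (o' + 1) < s' := by
              rw [hedef]; linarith
            have hsub : Finset.range (o' + 2) ⊆
                Finset.filter (fun a => e a < s') (Finset.range P) := by
              intro i hi
              simp only [Finset.mem_range] at hi
              simp only [Finset.mem_filter, Finset.mem_range]
              refine ⟨by omega, ?_⟩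
              calc e i ≤ e (o' + 1) := hemono.monotone (by omega)
                _ < s' := he1
            have hcard : o' + 2 ≤ Multiset.countP (fun x => x < s')
                (Multiset.map e (Finset.range P).val) := by
              rw [Multiset.countP_map]
              have : Multiset.filter (fun a => e a < s') (Finset.range P).val
                  = (Finset.filter (fun a => e a < s') (Finset.range P)).val := by
                rw [Finset.filter_val]
              rw [this]
              have := Finset.card_le_card hsub
              simp only [Finset.card_range] at this; exact this
            rw [← hcnt2, hcnt] at hcard
            split_ifs at hcard <;> omega
          · -- o' = P - 1
            have : o' = P - 1 := by omega
            rw [this, hedef, se_last hP hm hμ hβ hγ]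
            linarith
        -- put it together
        have harr2 := arr_se hP hm hμ hβ hβ1 hγ o' ho'
        have hcost := cost_se hP hm hμ hβ hβ1 hγ ho'
        unfold cost at hcost ⊢
        rw [harr2] at hcost
        rw [hso']
        have hlip := sdc_lipschitz hβ hγ harrlb
        rw [← hedef] at hcost
        nlinarith [harrlb]
  refine ⟨hmain, fun ε hε => ?_⟩
  have := cost_se hP hm hμ hβ hβ1 hγ hj
  rw [← hedef] at this
  rw [this]
  linarith
end main
end

section
/- Let s be a time profile, let 1 ≤ n ≤ P−1, and let C^r be a real number with C_1 = C_n = C^r. Suppose there exists a real s^r with s_n < s^r ≤ d_n + m/μ satisfying (d_n + m/μ − s^r) + V(d_n + m/μ) = C^r, and suppose s^r < s_{n+1}. Then the forecasted cost satisfies Ĉ(s^r | s) ≤ C^r, and equality Ĉ(s^r | s) = C^r holds only if V(s^r) = C^r (in which case s^r = d_n + m/μ). -/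
/-- The forecasted cost `Ĉ(t | s) = c`, as a relation (the cases are mutually exclusive
for `t` distinct from all departure times of the strictly increasing profile `s`). -/
def Forecast (P : ℕ) (β γ m μ : ℝ) (s : ℕ → ℝ) (t c : ℝ) : Prop :=
  (∃ k, k + 1 < P ∧ s k < t ∧ t < s (k + 1) ∧
      arr m μ s (k + 1) - arr m μ s k = m / μ ∧
      c = cost β γ m μ s k +
        (cost β γ m μ s (k + 1) - cost β γ m μ s k) / (s (k + 1) - s k) * (t - s k)) ∨
  (∃ k, k + 1 < P ∧ s k < t ∧ t < s (k + 1) ∧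
      m / μ < arr m μ s (k + 1) - arr m μ s k ∧
      ((t ≤ arr m μ s k ∧
          c = cost β γ m μ s k +
            (sdc β γ (arr m μ s k) - cost β γ m μ s k) / (arr m μ s k - s k) * (t - s k)) ∨
        (arr m μ s k < t ∧ c = sdc β γ t))) ∨
  (s (P - 1) < t ∧ t < arr m μ s (P - 1) ∧
      c = cost β γ m μ s (P - 1) +
        (sdc β γ (arr m μ s (P - 1)) - cost β γ m μ s (P - 1)) /
          (arr m μ s (P - 1) - s (P - 1)) * (t - s (P - 1))) ∨
  ((t < s 0 ∨ arr m μ s (P - 1) ≤ t) ∧ c = sdc β γ t)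

lemma profile_mono (P : ℕ) (s : ℕ → ℝ) (hs : IsProfile P s) :
    ∀ j, j < P → ∀ i, i ≤ j → s i ≤ s j := by
  intro j
  induction j with
  | zero =>
    intro _ i hi
    have : i = 0 := by omega
    rw [this]
  | succ k ih =>
    intro hj i hi
    rcases Nat.lt_succ_iff_lt_or_eq.mp (Nat.lt_succ_of_le hi) with h | h
    · exact le_trans (ih (by omega) i (by omega)) (le_of_lt (hs k hj))
    · exact le_of_eq (by rw [h])

lemma sdc_le_slope (β γ d e : ℝ) (hβ : 0 < β) (hγ : 0 < γ) (hde : d ≤ e) :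
    sdc β γ d ≤ sdc β γ e + β * (e - d) := by
  unfold sdc
  have h1 : max (-d) 0 ≤ max (-e) 0 + (e - d) := by
    apply max_le
    · have := le_max_left (-e) (0:ℝ); linarith
    · have := le_max_right (-e) (0:ℝ); linarith
  have h2 : max d 0 ≤ max e 0 := max_le_max hde le_rfl
  nlinarith [mul_le_mul_of_nonneg_left h1 hβ.le, mul_le_mul_of_nonneg_left h2 hγ.le]

theorem forecast_at_reference_time (P : ℕ) (hP : 2 ≤ P) (m μ β γ : ℝ)
    (hm : 0 < m) (hm1 : m ≤ 1) (hμ : 0 < μ)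
    (hβ : 0 < β) (hβ1 : β < 1) (hγ : 0 < γ)
    (s : ℕ → ℝ) (hs : IsProfile P s)
    (n : ℕ) (hn : 1 ≤ n) (hnP : n ≤ P - 1)
    (Cr : ℝ) (hC1 : cost β γ m μ s 0 = Cr) (hCn : cost β γ m μ s (n - 1) = Cr)
    (sr : ℝ) (h1 : s (n - 1) < sr) (h2 : sr ≤ arr m μ s (n - 1) + m / μ)
    (heq : (arr m μ s (n - 1) + m / μ - sr) + sdc β γ (arr m μ s (n - 1) + m / μ) = Cr)
    (h3 : sr < s n) :
    ∀ c, Forecast P β γ m μ s sr c →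
      c ≤ Cr ∧ (c = Cr → sdc β γ sr = Cr ∧ sr = arr m μ s (n - 1) + m / μ) := by
  obtain ⟨a, rfl⟩ : ∃ a, n = a + 1 := ⟨n - 1, (Nat.succ_pred_eq_of_pos hn).symm⟩
  simp only [Nat.add_sub_cancel] at hCn h1 h2 heq ⊢
  have hmμ : 0 < m / μ := div_pos hm hμ
  have haP : a + 1 < P := by omega
  have harr_ge : ∀ k, s k ≤ arr m μ s k := by
    intro k
    cases k with
    | zero => exact le_of_eq rfl
    | succ j => exact le_max_right _ _
  have hmono := profile_mono P s hs
  intro c hc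
  rcases hc with ⟨k, hk, hk1, hk2, hq, hcv⟩ | ⟨k, hk, hk1, hk2, hq, hcv⟩ |
    ⟨h4, h5, hcv⟩ | ⟨h4, hcv⟩
  · -- mass departure case
    have hka : a = k := by
      by_contra hne
      rcases Nat.lt_or_ge k a with hlt | hge
      · have : s (k+1) ≤ s a := hmono a (by omega) (k+1) (by omega)
        linarith
      · have : s (a+1) ≤ s k := hmono k (by omega) (a+1) (by omega)
        have hak : a < k := by omega
        linarith
    subst hka
    have harr1 : arr m μ s (a+1) = arr m μ s a + m / μ := by linarith
    have hcostA1 : cost β γ m μ s (a+1) = Cr + (sr - s (a+1)) := by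
      have hd : cost β γ m μ s (a+1)
          = (arr m μ s (a+1) - s (a+1)) + sdc β γ (arr m μ s (a+1)) := rfl
      rw [hd, harr1]; linarith
    have hden : 0 < s (a+1) - s a := by linarith
    have hslope : (cost β γ m μ s (a+1) - cost β γ m μ s a) / (s (a+1) - s a) < 0 := by
      rw [hcostA1, hCn]
      exact div_neg_of_neg_of_pos (by linarith) hden
    have hterm : (cost β γ m μ s (a+1) - cost β γ m μ s a) / (s (a+1) - s a) * (sr - s a) < 0 :=
      mul_neg_of_neg_of_pos hslope (by linarith)
    have hclt : c < Cr := by rw [hcv]; linarith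
    exact ⟨le_of_lt hclt, fun hce => absurd hce (by linarith)⟩
  · -- queue-clearing case
    have hka : a = k := by
      by_contra hne
      rcases Nat.lt_or_ge k a with hlt | hge
      · have : s (k+1) ≤ s a := hmono a (by omega) (k+1) (by omega)
        linarith
      · have : s (a+1) ≤ s k := hmono k (by omega) (a+1) (by omega)
        have hak : a < k := by omega
        linarith
    subst hka
    rcases hcv with ⟨hle, hc⟩ | ⟨hlt, hc⟩
    · -- sr still in queue segment
      have hw : s a < arr m μ s a := lt_of_lt_of_le hk1 hle
      have hwne : arr m μ s a - s a ≠ 0 := ne_of_gt (by linarith)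
      have hcosta : cost β γ m μ s a
          = (arr m μ s a - s a) + sdc β γ (arr m μ s a) := rfl
      have hslope : (sdc β γ (arr m μ s a) - cost β γ m μ s a) / (arr m μ s a - s a) = -1 := by
        rw [hcosta]
        field_simp
        ring
      have hcval : c = Cr - (sr - s a) := by
        rw [hc, hslope, hCn]; ring
      constructor
      · rw [hcval]; linarith
      · intro hce; rw [hcval] at hce; exfalso; linarith
    · -- sr after queue dissolves : c = sdc sr
      have hkey := sdc_le_slope β γ sr (arr m μ s a + m / μ) hβ hγ h2
      have hΔ : 0 ≤ arr m μ s a + m / μ - sr := by linarith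
      have hβΔ : β * (arr m μ s a + m / μ - sr) ≤ arr m μ s a + m / μ - sr := by nlinarith
      have hcle : c ≤ Cr := by rw [hc]; linarith
      refine ⟨hcle, fun hce => ?_⟩
      have hsd : sdc β γ sr = Cr := by rw [← hc]; exact hce
      refine ⟨hsd, ?_⟩
      by_contra hne
      have hΔpos : 0 < arr m μ s a + m / μ - sr := by
        rcases lt_or_eq_of_le hΔ with h | h
        · exact h
        · exact absurd (by linarith : sr = arr m μ s a + m / μ) hne
      nlinarith
  · -- after last departure: impossible
    exfalso
    have : s (a+1) ≤ s (P-1) := hmono (P-1) (by omega) (a+1) (by omega)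
    linarith
  · -- outside: impossible
    exfalso
    rcases h4 with h | h
    · have : s 0 ≤ s a := hmono a (by omega) 0 (by omega)
      linarith
    · have h5 : s (a+1) ≤ s (P-1) := hmono (P-1) (by omega) (a+1) (by omega)
      have := harr_ge (P-1)
      linarith
end
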